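/- Let a > 0, b > 0 and p > 1 be constants and let T > 0. Suppose H : [0,T] → ℝ is differentiable and strictly positive, and G, W : [0,T] → ℝ are continuous and nonnegative, with (1/2)·H'(t) ≤ a·H(t) − b·G(t) + W(t) for all t ∈ [0,T]. Then the time average satisfies ⟨G/H^p⟩_T ≤ (1/b)·[ a·⟨H^{1−p}⟩_T + ⟨W/H^p⟩_T + (1/(2T(p−1)))·( H(T)^{1−p} − H(0)^{1−p} ) ]. -/

import Mathlib

/-- The generic ladder lemma: if `H > 0` is differentiable,
`G, W ≥ 0` are continuous, `p > 1`, and `(1/2)·H' ≤ a·H − b·G + W` on `[0,T]`,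
then `⟨G/Hᵖ⟩_T ≤ (1/b)·[a·⟨H^{1−p}⟩_T + ⟨W/Hᵖ⟩_T
  + (1/(2T(p−1)))·(H(T)^{1−p} − H(0)^{1−p})]`. -/
theorem ladder_lemma (a b p T : ℝ) (ha : 0 < a) (hb : 0 < b) (hp : 1 < p) (hT : 0 < T)
    (H H' G W : ℝ → ℝ)
    (hderiv : ∀ t ∈ Set.Icc (0:ℝ) T, HasDerivAt H (H' t) t)
    (hHpos : ∀ t ∈ Set.Icc (0:ℝ) T, 0 < H t)
    (hGc : ContinuousOn G (Set.Icc (0:ℝ) T))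
    (hWc : ContinuousOn W (Set.Icc (0:ℝ) T))
    (hGnn : ∀ t ∈ Set.Icc (0:ℝ) T, 0 ≤ G t)
    (hWnn : ∀ t ∈ Set.Icc (0:ℝ) T, 0 ≤ W t)
    (hineq : ∀ t ∈ Set.Icc (0:ℝ) T, (1/2) * H' t ≤ a * H t - b * G t + W t) :
    (1/T) * ∫ τ in (0:ℝ)..T, G τ / H τ ^ p ≤
      (1/b) * (a * ((1/T) * ∫ τ in (0:ℝ)..T, H τ ^ (1 - p)) +
        (1/T) * (∫ τ in (0:ℝ)..T, W τ / H τ ^ p) +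
        (1/(2*T*(p-1))) * (H T ^ (1 - p) - H 0 ^ (1 - p))) := by
  have huIcc : Set.uIcc (0:ℝ) T = Set.Icc (0:ℝ) T := Set.uIcc_of_le hT.le
  have hHc : ContinuousOn H (Set.Icc (0:ℝ) T) := fun t ht =>
    (hderiv t ht).continuousAt.continuousWithinAt
  have hHppos : ∀ t ∈ Set.Icc (0:ℝ) T, 0 < H t ^ p := fun t ht =>
    Real.rpow_pos_of_pos (hHpos t ht) p
  have hHpc : ContinuousOn (fun τ => H τ ^ p) (Set.Icc (0:ℝ) T) :=
    hHc.rpow_const (fun t ht => Or.inl (hHpos t ht).ne')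
  have c1 : ContinuousOn (fun τ => G τ / H τ ^ p) (Set.Icc (0:ℝ) T) :=
    hGc.div hHpc (fun t ht => (hHppos t ht).ne')
  have c2 : ContinuousOn (fun τ => H τ ^ (1 - p)) (Set.Icc (0:ℝ) T) :=
    hHc.rpow_const (fun t ht => Or.inl (hHpos t ht).ne')
  have c3 : ContinuousOn (fun τ => W τ / H τ ^ p) (Set.Icc (0:ℝ) T) :=
    hWc.div hHpc (fun t ht => (hHppos t ht).ne')
  have i1 : IntervalIntegrable (fun τ => G τ / H τ ^ p) MeasureTheory.volume 0 T :=
    (huIcc ▸ c1).intervalIntegrable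
  have i2 : IntervalIntegrable (fun τ => H τ ^ (1 - p)) MeasureTheory.volume 0 T :=
    (huIcc ▸ c2).intervalIntegrable
  have i3 : IntervalIntegrable (fun τ => W τ / H τ ^ p) MeasureTheory.volume 0 T :=
    (huIcc ▸ c3).intervalIntegrable
  set φ : ℝ → ℝ := fun τ =>
    2 * (p - 1) * (b * (G τ / H τ ^ p) - a * H τ ^ (1 - p) - W τ / H τ ^ p) with hφ
  have hφc : ContinuousOn φ (Set.Icc (0:ℝ) T) :=
    (continuousOn_const.mul (((continuousOn_const.mul c1).sub
      (continuousOn_const.mul c2)).sub c3))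
  have hφint : MeasureTheory.IntegrableOn φ (Set.Icc (0:ℝ) T) :=
    hφc.integrableOn_Icc
  -- key FTC inequality
  have hkey : (∫ y in (0:ℝ)..T, φ y) ≤ H T ^ (1 - p) - H 0 ^ (1 - p) := by
    apply intervalIntegral.integral_le_sub_of_hasDeriv_right_of_le hT.le
      (g' := fun x => H' x * (1 - p) * H x ^ (1 - p - 1)) c2 _ hφint
    · intro x hx
      have hxI : x ∈ Set.Icc (0:ℝ) T := Set.Ioo_subset_Icc_self hx
      have hHx : 0 < H x := hHpos x hxI
      have hux : 0 < (H x ^ p)⁻¹ := inv_pos.2 (hHppos x hxI)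
      have hrw1 : H x ^ (1 - p - 1) = (H x ^ p)⁻¹ := by
        rw [show (1 : ℝ) - p - 1 = -p by ring, Real.rpow_neg hHx.le]
      have hrw2 : H x ^ (1 - p) = H x * (H x ^ p)⁻¹ := by
        rw [show (1 : ℝ) - p = 1 + (-p) by ring, Real.rpow_add hHx, Real.rpow_one,
          Real.rpow_neg hHx.le]
      have hi := hineq x hxI
      have h5 : 0 ≤ (p - 1) * (H x ^ p)⁻¹ *
          (2 * (a * H x - b * G x + W x) - H' x) := by
        apply mul_nonneg (mul_nonneg (by linarith) hux.le)
        linarith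
      simp only [hφ, hrw1, hrw2, div_eq_mul_inv]
      nlinarith [h5]
    · intro x hx
      have hxI : x ∈ Set.Icc (0:ℝ) T := Set.Ioo_subset_Icc_self hx
      exact (((hderiv x hxI).rpow_const (Or.inl (hHpos x hxI).ne'))).hasDerivWithinAt
  -- compute the integral of φ
  have hsplit : (∫ y in (0:ℝ)..T, φ y) =
      2 * (p - 1) * (b * (∫ τ in (0:ℝ)..T, G τ / H τ ^ p)
        - a * (∫ τ in (0:ℝ)..T, H τ ^ (1 - p))
        - (∫ τ in (0:ℝ)..T, W τ / H τ ^ p)) := by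
    rw [hφ]
    rw [intervalIntegral.integral_const_mul]
    congr 1
    rw [intervalIntegral.integral_sub ((i1.const_mul b).sub (i2.const_mul a)) i3,
      intervalIntegral.integral_sub (i1.const_mul b) (i2.const_mul a),
      intervalIntegral.integral_const_mul, intervalIntegral.integral_const_mul]
  rw [hsplit] at hkey
  set IG := ∫ τ in (0:ℝ)..T, G τ / H τ ^ p
  set IH := ∫ τ in (0:ℝ)..T, H τ ^ (1 - p)
  set IW := ∫ τ in (0:ℝ)..T, W τ / H τ ^ p
  set Δ := H T ^ (1 - p) - H 0 ^ (1 - p)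
  have hp1 : (0:ℝ) < p - 1 := by linarith
  have key : b * IG ≤ a * IH + IW + Δ / (2 * (p - 1)) := by
    have h2 : b * IG - a * IH - IW ≤ Δ / (2 * (p - 1)) := by
      rw [le_div_iff₀ (by positivity)]
      nlinarith [hkey]
    linarith
  have hTinv : (0:ℝ) < 1 / T := by positivity
  calc (1/T) * IG = (1/(T*b)) * (b * IG) := by field_simp
    _ ≤ (1/(T*b)) * (a * IH + IW + Δ / (2 * (p - 1))) := by
        apply mul_le_mul_of_nonneg_left key (by positivity)
    _ = (1/b) * (a * ((1/T) * IH) + (1/T) * IW + (1/(2*T*(p-1))) * Δ) := by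
        field_simp
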